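/- Let W be a symmetric n×n real matrix with n ≥ 2, and for t ∈ ℝ let K^df(t) = ∑_{k=0}^∞ (t^k/k!!)·W^k denote the double-factorial similarity matrix (the series converges for every t). Then there exists t₀ > 0 such that for all t with 0 < t < t₀, the matrix K^df(t) is positive definite and is a proximity on {1,…,n}: K^df(t)_xy + K^df(t)_xz − K^df(t)_yz ≤ K^df(t)_xx for all x, y, z, with strict inequality whenever z = y and y ≠ x. -/

import Mathlib

open scoped Nat

lemma df_ge : ∀ k : ℕ, (k/2)! ≤ k‼
  | 0 => le_refl 1
  | 1 => le_refl 1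
  | (k+2) => by
      have ih := df_ge k
      have h : (k+2)/2 = k/2 + 1 := by omega
      rw [h, Nat.factorial_succ, Nat.doubleFactorial_add_two]
      exact Nat.mul_le_mul (by omega) ih

lemma summable_half (g : ℕ → ℝ) (hg : ∀ m, 0 ≤ g m) (h : Summable g) :
    Summable fun k : ℕ => g (k/2) := by
  rw [← (Nat.divModEquiv 2).symm.summable_iff]
  have he : ((fun k : ℕ => g (k/2)) ∘ (Nat.divModEquiv 2).symm) = fun p : ℕ × Fin 2 => g p.1 := by
    funext p
    simp only [Function.comp_apply, Nat.divModEquiv_symm_apply]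
    congr 1
    omega
  rw [he, summable_prod_of_nonneg (fun p => hg p.1)]
  constructor
  · intro a; exact summable_of_finite_support (Set.toFinite _)
  · simpa [tsum_fintype] using h.mul_left 2

lemma summable_df (r : ℝ) (hr : 0 ≤ r) : Summable fun k : ℕ => r^k / (k‼ : ℝ) := by
  set s := max r 1 with hs
  have hs1 : 1 ≤ s := le_max_right _ _
  have hs0 : 0 < s := lt_of_lt_of_le one_pos hs1
  have key : Summable fun k : ℕ => s * (s^2)^(k/2) / ((k/2)! : ℝ) := by
    have := (Real.summable_pow_div_factorial (s^2)).mul_left s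
    simpa [mul_div_assoc] using summable_half (fun m => s * ((s^2)^m / (m ! : ℝ)))
      (fun m => by positivity) this
  refine key.of_nonneg_of_le (fun k => by positivity) (fun k => ?_)
  have h1 : r^k ≤ s * (s^2)^(k/2) := by
    calc r^k ≤ s^k := pow_le_pow_left₀ hr (le_max_left _ _) k
    _ ≤ s^(2*(k/2)+1) := pow_le_pow_right₀ hs1 (by omega)
    _ = s * (s^2)^(k/2) := by rw [pow_succ', pow_mul]
  have h2 : ((k/2)! : ℝ) ≤ (k‼ : ℝ) := Nat.cast_le.mpr (df_ge k)
  have hf : (0:ℝ) < ((k/2)! : ℝ) := by positivity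
  exact div_le_div₀ (by positivity) h1 hf h2

lemma pow_entry_bound {n : ℕ} (W : Matrix (Fin n) (Fin n) ℝ) (C : ℝ) (hC1 : 1 ≤ C)
    (hC : ∀ i j, |W i j| ≤ C) (hn : 1 ≤ n) :
    ∀ k i j, |(W^k) i j| ≤ ((n:ℝ)*C)^k := by
  intro k
  induction k with
  | zero => intro i j
            simp only [pow_zero, Matrix.one_apply]
            split <;> norm_num
  | succ k ih =>
    intro i j
    have h : (W^(k+1)) i j = ∑ l, (W^k) i l * W l j := by
      rw [pow_succ, Matrix.mul_apply]
    rw [h]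
    calc |∑ l, (W^k) i l * W l j| ≤ ∑ l, |(W^k) i l * W l j| := Finset.abs_sum_le_sum_abs _ _
    _ ≤ ∑ _l : Fin n, ((n:ℝ)*C)^k * C := by
        refine Finset.sum_le_sum fun l _ => ?_
        rw [abs_mul]
        exact mul_le_mul (ih i l) (hC l j) (abs_nonneg _) (by positivity)
    _ = n * (((n:ℝ)*C)^k * C) := by rw [Finset.sum_const]; simp [Finset.card_univ, nsmul_eq_mul]
    _ ≤ ((n:ℝ)*C)^(k+1) := by
        rw [pow_succ]
        have hn' : (1:ℝ) ≤ n := by exact_mod_cast hn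
        nlinarith [pow_nonneg (by positivity : (0:ℝ) ≤ (n:ℝ)*C) k]


lemma perturbation_step {n : ℕ} (hn : 2 ≤ n) (K : Matrix (Fin n) (Fin n) ℝ)
    (hsym : ∀ i j, K i j = K j i) (δ : ℝ) (hδpos : 0 < δ) (hδ16 : δ ≤ 1/16)
    (hnδ : (n:ℝ)*δ ≤ 1/8)
    (hE : ∀ i j : Fin n, |K i j - (if i = j then (1:ℝ) else 0)| ≤ δ) :
    K.PosDef ∧ (∀ x y z : Fin n, K x y + K x z - K y z ≤ K x x) ∧
      (∀ x y : Fin n, y ≠ x → K x y + K x y - K y y < K x x) := by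
  have hoff : ∀ i j : Fin n, i ≠ j → |K i j| ≤ δ := by
    intro i j hij
    have := hE i j
    simpa [hij] using this
  have hdiag : ∀ i : Fin n, |K i i - 1| ≤ δ := by
    intro i
    have := hE i i
    simpa using this
  refine ⟨Matrix.posDef_iff_dotProduct_mulVec.mpr ⟨?_, ?_⟩, ?_, ?_⟩
  · -- IsHermitian
    ext i j
    simp only [Matrix.conjTranspose_apply, star_trivial]
    exact hsym j i
  · -- quadratic form positive
    intro x hx
    simp only [star_trivial]
    have hquad : dotProduct x (Matrix.mulVec K x) = ∑ i, ∑ j, x i * K i j * x j := by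
      simp only [dotProduct, Matrix.mulVec, Finset.mul_sum]
      exact Finset.sum_congr rfl fun i _ => Finset.sum_congr rfl fun j _ => by ring
    rw [hquad]
    set S : ℝ := ∑ i, (x i)^2 with hSdef
    have hSpos : 0 < S := by
      obtain ⟨i, hi⟩ := Function.ne_iff.mp hx
      have h1 : (x i)^2 ≤ S :=
        Finset.single_le_sum (f := fun i => (x i)^2) (fun _ _ => sq_nonneg _) (Finset.mem_univ i)
      have h2 : 0 < (x i)^2 := lt_of_le_of_ne (sq_nonneg _) (Ne.symm (pow_ne_zero 2 hi))
      linarith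
    have hsplit : ∀ i j : Fin n, x i * K i j * x j
        = x i * (if i = j then (1:ℝ) else 0) * x j
          + x i * (K i j - if i = j then (1:ℝ) else 0) * x j := by
      intro i j; ring
    have hmain : (∑ i, ∑ j, x i * K i j * x j)
        = S + ∑ i, ∑ j, x i * (K i j - if i = j then (1:ℝ) else 0) * x j := by
      simp only [hsplit, Finset.sum_add_distrib]
      congr 1
      rw [hSdef]
      refine Finset.sum_congr rfl fun i _ => ?_
      rw [Finset.sum_eq_single i]
      · simp; ring
      · intro j _ hj; simp [Ne.symm hj]
      · intro h; exact absurd (Finset.mem_univ i) h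
    rw [hmain]
    have hR : |∑ i, ∑ j, x i * (K i j - if i = j then (1:ℝ) else 0) * x j| ≤ δ * (n * S) := by
      calc |∑ i, ∑ j, x i * (K i j - if i = j then (1:ℝ) else 0) * x j|
          ≤ ∑ i, |∑ j, x i * (K i j - if i = j then (1:ℝ) else 0) * x j| :=
            Finset.abs_sum_le_sum_abs _ _
      _ ≤ ∑ i, ∑ j, |x i * (K i j - if i = j then (1:ℝ) else 0) * x j| :=
            Finset.sum_le_sum fun i _ => Finset.abs_sum_le_sum_abs _ _
      _ ≤ ∑ i, ∑ j : Fin n, |x i| * δ * |x j| := by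
            refine Finset.sum_le_sum fun i _ => Finset.sum_le_sum fun j _ => ?_
            rw [abs_mul, abs_mul]
            exact mul_le_mul_of_nonneg_right
              (mul_le_mul_of_nonneg_left (hE i j) (abs_nonneg _)) (abs_nonneg _)
      _ = δ * (∑ i, |x i|)^2 := by
            simp only [sq, Finset.mul_sum, Finset.sum_mul]
            exact Finset.sum_congr rfl fun i _ => Finset.sum_congr rfl fun j _ => by ring
      _ ≤ δ * (n * S) := by
            refine mul_le_mul_of_nonneg_left ?_ (le_of_lt hδpos)
            have := sq_sum_le_card_mul_sum_sq (s := (Finset.univ : Finset (Fin n)))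
              (f := fun i => |x i|)
            simpa [hSdef, Finset.card_univ, sq_abs] using this
    have habs := abs_le.mp hR
    have h9 := mul_le_mul_of_nonneg_right hnδ hSpos.le
    nlinarith [habs.1, h9, hSpos]
  · -- proximity inequality
    intro x y z
    by_cases hyx : y = x
    · subst hyx
      have h : K y y + K y z - K y z = K y y := by ring
      linarith [h.le]
    by_cases hzx : z = x
    · subst hzx
      have h := hsym z y
      linarith [h]
    · have h1 := abs_le.mp (hoff x y (fun h => hyx h.symm))
      have h2 := abs_le.mp (hoff x z (fun h => hzx h.symm))
      have h4 := abs_le.mp (hdiag x)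
      have h3 : -δ ≤ K y z := by
        by_cases hyz : y = z
        · subst hyz
          have := abs_le.mp (hdiag y)
          linarith
        · linarith [(abs_le.mp (hoff y z hyz)).1]
      linarith
  · -- strict inequality
    intro x y hyx
    have h1 := abs_le.mp (hoff x y (fun h => hyx h.symm))
    have h4 := abs_le.mp (hdiag x)
    have h5 := abs_le.mp (hdiag y)
    linarith


set_option maxHeartbeats 1000000 in
open scoped Nat in
/-- Let `W` be a symmetric `n × n` real matrix, `n ≥ 2`, and for `t ∈ ℝ`
let `K^df(t) = ∑_{k=0}^∞ (t^k / k‼) • W^k` be the double-factorial similarity matrix (the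
series converges for every `t`).  Then there exists `t₀ > 0` such that for all `0 < t < t₀`
the matrix `K^df(t)` is positive definite and a proximity on `{1,…,n}`. -/
theorem double_factorial_similarity_small_t {n : ℕ} (hn : 2 ≤ n)
    (W : Matrix (Fin n) (Fin n) ℝ) (hW_symm : W.IsSymm)
    (Kdf : ℝ → Matrix (Fin n) (Fin n) ℝ)
    (hKdf : ∀ t : ℝ, Kdf t = ∑' k : ℕ, (t ^ k / (k‼ : ℝ)) • W ^ k) :
    (∀ t : ℝ, Summable fun k : ℕ => (t ^ k / (k‼ : ℝ)) • W ^ k) ∧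
    ∃ t₀ : ℝ, 0 < t₀ ∧ ∀ t : ℝ, 0 < t → t < t₀ →
      (Kdf t).PosDef ∧
      (∀ x y z : Fin n, Kdf t x y + Kdf t x z - Kdf t y z ≤ Kdf t x x) ∧
      (∀ x y : Fin n, y ≠ x → Kdf t x y + Kdf t x y - Kdf t y y < Kdf t x x) := by
  classical
  set C : ℝ := 1 + ∑ i, ∑ j, |W i j| with hCdef
  have hC1 : 1 ≤ C := le_add_of_nonneg_right (by positivity)
  have hCb : ∀ i j, |W i j| ≤ C := by
    intro i j
    have h1 : |W i j| ≤ ∑ j', |W i j'| :=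
      Finset.single_le_sum (f := fun j' => |W i j'|) (fun _ _ => abs_nonneg _) (Finset.mem_univ j)
    have h2 : (∑ j', |W i j'|) ≤ ∑ i', ∑ j', |W i' j'| :=
      Finset.single_le_sum (f := fun i' => ∑ j', |W i' j'|)
        (fun i' _ => Finset.sum_nonneg fun _ _ => abs_nonneg _) (Finset.mem_univ i)
    simp only [hCdef]; linarith
  set r : ℝ := n * C with hrdef
  have hn1 : (1:ℝ) ≤ n := by exact_mod_cast (by omega : 1 ≤ n)
  have hr1 : 1 ≤ r := one_le_mul_of_one_le_of_one_le hn1 hC1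
  have hr0 : 0 ≤ r := le_trans zero_le_one hr1
  have hWk : ∀ k (i j : Fin n), |(W^k) i j| ≤ r^k :=
    pow_entry_bound W C hC1 hCb (by omega)
  have hdfpos : ∀ k : ℕ, (0:ℝ) < (k‼ : ℝ) := fun k => by
    exact_mod_cast Nat.doubleFactorial_pos k
  -- entrywise summability
  have habs_bound : ∀ (t : ℝ) (k : ℕ) (i j : Fin n),
      |(t ^ k / (k‼ : ℝ)) * (W ^ k) i j| ≤ (|t| * r)^k / (k‼ : ℝ) := by
    intro t k i j
    calc |(t ^ k / (k‼ : ℝ)) * (W ^ k) i j| = (|t|^k/(k‼:ℝ)) * |(W^k) i j| := by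
          rw [abs_mul, abs_div, abs_pow, abs_of_pos (hdfpos k)]
    _ ≤ (|t|^k/(k‼:ℝ)) * r^k :=
          mul_le_mul_of_nonneg_left (hWk k i j) (by positivity)
    _ = (|t| * r)^k/(k‼:ℝ) := by rw [mul_pow (|t|) r]; exact div_mul_eq_mul_div _ _ _
  have hentry_sum : ∀ (t : ℝ) (i j : Fin n),
      Summable fun k : ℕ => (t ^ k / (k‼ : ℝ)) * (W ^ k) i j := by
    intro t i j
    exact Summable.of_norm_bounded
      (summable_df _ (by positivity)) (fun k => habs_bound t k i j)
  have hsummat : ∀ t : ℝ, Summable fun k : ℕ => (t ^ k / (k‼ : ℝ)) • W ^ k := by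
    intro t
    refine Pi.summable.mpr fun i => Pi.summable.mpr fun j => ?_
    simpa [Matrix.smul_apply, smul_eq_mul] using hentry_sum t i j
  refine ⟨hsummat, ?_⟩
  have hentry : ∀ (t : ℝ) (i j : Fin n),
      Kdf t i j = ∑' k : ℕ, (t ^ k / (k‼ : ℝ)) * (W ^ k) i j := by
    intro t i j
    rw [hKdf]
    exact ((Pi.hasSum.mp ((Pi.hasSum.mp (hsummat t).hasSum) i)) j).tsum_eq.symm
  -- symmetry of Kdf
  have hWksymm : ∀ (k : ℕ) (i j : Fin n), (W^k) i j = (W^k) j i := by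
    intro k i j
    exact (hW_symm.pow k).apply j i
  have hsymmK : ∀ (t : ℝ) (i j : Fin n), Kdf t i j = Kdf t j i := by
    intro t i j
    rw [hentry, hentry]
    exact tsum_congr fun k => by rw [hWksymm k i j]
  -- tail sum
  set D : ℝ := ∑' k : ℕ, r^(k+1) / ((k+1)‼ : ℝ) with hDdef
  have hDsum : Summable fun k : ℕ => r^(k+1) / ((k+1)‼ : ℝ) :=
    (summable_nat_add_iff 1).mpr (summable_df r hr0)
  have hD0 : 0 ≤ D := tsum_nonneg fun k => by positivity
  set δ : ℝ := 1/(8*(n:ℝ)) with hδdef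
  have hδpos : 0 < δ := by positivity
  have hδ16 : δ ≤ 1/16 := by
    rw [hδdef]
    rw [div_le_div_iff₀ (by positivity) (by norm_num)]
    have hn2 : (2:ℝ) ≤ n := by exact_mod_cast hn
    nlinarith
  refine ⟨min 1 (1/(8*(n:ℝ)*(D+1))), lt_min one_pos (by positivity), fun t ht ht' => ?_⟩
  have ht1 : t ≤ 1 := le_of_lt (lt_of_lt_of_le ht' (min_le_left _ _))
  have htD : t * (D+1) ≤ 1/(8*(n:ℝ)) := by
    have h1 : t ≤ 1/(8*(n:ℝ)*(D+1)) := le_of_lt (lt_of_lt_of_le ht' (min_le_right _ _))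
    have h2 : t * (D+1) ≤ (1/(8*(n:ℝ)*(D+1))) * (D+1) :=
      mul_le_mul_of_nonneg_right h1 (by linarith)
    have h3 : (1/(8*(n:ℝ)*(D+1))) * (D+1) = 1/(8*(n:ℝ)) := by
      field_simp
    linarith [h2, h3 ▸ h2]
  -- main entrywise estimate
  have hE : ∀ i j : Fin n, |Kdf t i j - (if i = j then (1:ℝ) else 0)| ≤ δ := by
    intro i j
    set g : ℕ → ℝ := fun k => (t ^ (k+1) / (((k+1):ℕ)‼ : ℝ)) * (W ^ (k+1)) i j with hgdef
    have hsum1 : Summable g := (summable_nat_add_iff 1).mpr (hentry_sum t i j)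
    have hgabs : Summable fun k => |g k| := hsum1.abs
    have hgnorm : Summable fun k => ‖g k‖ := by simpa [Real.norm_eq_abs] using hgabs
    have h1 : |∑' k, g k| ≤ ∑' k, |g k| := by
      simpa [Real.norm_eq_abs] using norm_tsum_le_tsum_norm hgnorm
    have hterm : ∀ k : ℕ, |g k| ≤ t * (r^(k+1) / (((k+1):ℕ)‼ : ℝ)) := by
      intro k
      refine (habs_bound t (k+1) i j).trans ?_
      rw [abs_of_pos ht]
      have hp : (t * r)^(k+1) ≤ t * r^(k+1) := by
        rw [mul_pow]
        have ht' : t^(k+1) ≤ t := by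
          calc t^(k+1) = t * t^k := by ring
          _ ≤ t * 1 := mul_le_mul_of_nonneg_left (pow_le_one₀ (le_of_lt ht) ht1) (le_of_lt ht)
          _ = t := mul_one t
        exact mul_le_mul_of_nonneg_right ht' (by positivity)
      exact (div_le_div_of_nonneg_right hp (hdfpos (k+1)).le : _) |>.trans_eq (by ring)
    have h2 : (∑' k, |g k|) ≤ ∑' k : ℕ, t * (r^(k+1) / (((k+1):ℕ)‼ : ℝ)) :=
      Summable.tsum_le_tsum hterm hgabs (hDsum.mul_left t)
    have h3 : (∑' k : ℕ, t * (r^(k+1) / (((k+1):ℕ)‼ : ℝ))) = t * D := tsum_mul_left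
    have hKij : Kdf t i j = (if i = j then (1:ℝ) else 0) + ∑' k, g k := by
      rw [hentry, Summable.tsum_eq_zero_add (hentry_sum t i j)]
      simp [hgdef, Matrix.one_apply]
    rw [hKij, add_sub_cancel_left]
    have h4 : t * D ≤ t * (D+1) := by nlinarith
    linarith
  have hoff : ∀ i j : Fin n, i ≠ j → |Kdf t i j| ≤ δ := by
    intro i j hij
    have := hE i j
    simpa [hij] using this
  have hdiag : ∀ i : Fin n, |Kdf t i i - 1| ≤ δ := by
    intro i
    have := hE i i
    simpa using this
  exact perturbation_step hn (Kdf t) (fun i j => hsymmK t i j) δ hδpos hδ16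
    (by
      have hn0 : (n:ℝ) ≠ 0 := by positivity
      rw [hδdef, mul_one_div, div_le_div_iff₀ (by positivity) (by norm_num)]
      ring_nf
      exact le_rfl) hE
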